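/- Let $f:[0,1]\to\mathbb R$ be continuous and let $n\ge 1$ be an integer. Define $f_n:(0,1)\to\mathbb R$ by $f_n(r) = -r^{-4n}\int_0^r s^{8n-1}\Big(\int_s^1 \tau^{1-4n} f(\tau)\,d\tau\Big)ds$. Then $f_n$ is twice continuously differentiable on $(0,1)$ and satisfies $f_n''(r)+\frac{1}{r}f_n'(r)-\frac{16n^2}{r^2}f_n(r) = f(r)$ for all $r\in(0,1)$. -/

import Mathlib

open Real MeasureTheory Set intervalIntegral

theorem stmt3 (f : ℝ → ℝ) (hf : ContinuousOn f (Set.Icc 0 1)) (n : ℕ) (hn : 1 ≤ n)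
    (fn : ℝ → ℝ)
    (hfn : ∀ r ∈ Set.Ioo (0:ℝ) 1,
      fn r = -(r ^ (-(4 * (n:ℤ)))) *
        ∫ s in (0:ℝ)..r, s ^ (8 * (n:ℤ) - 1) * ∫ τ in s..(1:ℝ), τ ^ (1 - 4 * (n:ℤ)) * f τ) :
    ContDiffOn ℝ 2 fn (Set.Ioo 0 1) ∧
    ∀ r ∈ Set.Ioo (0:ℝ) 1,
      deriv (deriv fn) r + (1 / r) * deriv fn r - (16 * (n:ℝ) ^ 2 / r ^ 2) * fn r = f r := by
  have h8 : (8 * (n:ℤ) - 1) = 2 * (4 * (n:ℤ)) - 1 := by ring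
  simp only [h8] at hfn
  set N : ℤ := 4 * (n:ℤ) with hNdef
  have hN4 : (4:ℤ) ≤ N := by simp only [hNdef]; omega
  set h : ℝ → ℝ := fun τ => τ ^ (1 - N) * f τ with hhdef
  set g : ℝ → ℝ := fun s => ∫ τ in s..(1:ℝ), h τ with hgdef
  set F : ℝ → ℝ := fun r => ∫ s in (0:ℝ)..r, s ^ (2*N - 1) * g s with hFdef
  have hfn' : Set.EqOn fn (fun r => -(r ^ (-N)) * F r) (Set.Ioo 0 1) := fun r hr => hfn r hr
  -- continuity of h on Ioc 0 1
  have hh_cont : ContinuousOn h (Set.Ioc 0 1) := by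
    intro x hx
    exact ((continuousAt_zpow₀ x (1 - N) (Or.inl (ne_of_gt hx.1))).continuousWithinAt).mul
      ((hf x ⟨hx.1.le, hx.2⟩).mono Ioc_subset_Icc_self)
  have hh_contIoo : ContinuousOn h (Set.Ioo 0 1) := hh_cont.mono Ioo_subset_Ioc_self
  -- derivative of g
  have hg_hasDeriv : ∀ s ∈ Set.Ioo (0:ℝ) 1, HasDerivAt g (-(h s)) s := by
    intro s hs
    refine intervalIntegral.integral_hasDerivAt_left ?_
      (hh_contIoo.stronglyMeasurableAtFilter isOpen_Ioo s hs)
      (hh_contIoo.continuousAt (isOpen_Ioo.mem_nhds hs))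
    apply ContinuousOn.intervalIntegrable
    apply hh_cont.mono
    rw [Set.uIcc_of_le hs.2.le]
    exact fun x hx => ⟨lt_of_lt_of_le hs.1 hx.1, hx.2⟩
  have hg_cont : ContinuousOn g (Set.Ioo 0 1) := fun s hs =>
    ((hg_hasDeriv s hs).continuousAt).continuousWithinAt
  -- bound for f
  obtain ⟨M, hM⟩ := isCompact_Icc.exists_bound_of_continuousOn hf
  have hM0 : 0 ≤ M := le_trans (norm_nonneg _) (hM 0 ⟨le_refl _, zero_le_one⟩)
  have hNR : (2:ℝ) < (N:ℝ) := by exact_mod_cast (by omega : (2:ℤ) < N)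
  -- bound for g
  have hg_bound : ∀ s ∈ Set.Ioc (0:ℝ) 1, |g s| ≤ M / ((N:ℝ) - 2) * s ^ (2 - N) := by
    intro s hs
    have hs0 : (0:ℝ) < s := hs.1
    have h0uIcc : (0:ℝ) ∉ Set.uIcc s 1 := by
      rw [Set.uIcc_of_le hs.2]
      intro hc
      exact absurd hc.1 (not_le.mpr hs0)
    have hbint : IntervalIntegrable (fun τ : ℝ => M * τ ^ (1 - N)) volume s 1 := by
      apply ContinuousOn.intervalIntegrable
      intro x hx
      have hx0 : x ≠ 0 := fun hc => h0uIcc (hc ▸ hx)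
      exact (continuousAt_zpow₀ x (1 - N) (Or.inl hx0)).continuousWithinAt.const_smul M
    have hA1 : (1:ℝ) ≤ s ^ (2 - N) := by
      have h1 : s ^ (2 - N) = (s⁻¹) ^ (N - 2) := by
        rw [inv_zpow, ← zpow_neg]; congr 1; ring
      rw [h1]
      exact one_le_zpow₀ ((one_le_inv₀ hs0).mpr hs.2) (by omega)
    have hle : ‖g s‖ ≤ |∫ τ in s..(1:ℝ), M * τ ^ (1 - N)| := by
      apply intervalIntegral.norm_integral_le_abs_of_norm_le _ hbint
      rw [Set.uIoc_of_le hs.2, MeasureTheory.ae_restrict_iff' measurableSet_Ioc]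
      filter_upwards with τ hτ
      have hτ0 : (0:ℝ) < τ := lt_trans hs0 hτ.1
      have h1 : ‖h τ‖ = τ ^ (1 - N) * |f τ| := by
        rw [hhdef]
        simp only [Real.norm_eq_abs, abs_mul]
        rw [abs_of_pos (zpow_pos hτ0 _)]
      rw [h1]
      have : |f τ| ≤ M := hM τ ⟨hτ0.le, hτ.2⟩
      calc τ ^ (1 - N) * |f τ| ≤ τ ^ (1 - N) * M :=
            mul_le_mul_of_nonneg_left this (zpow_nonneg hτ0.le _)
        _ = M * τ ^ (1 - N) := by ring
    have hcomp : ∫ τ in s..(1:ℝ), M * τ ^ (1 - N)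
        = M * ((1 - s ^ (2 - N)) / ((2:ℝ) - N)) := by
      have he : (1:ℤ) - N + 1 = 2 - N := by ring
      rw [intervalIntegral.integral_const_mul, integral_zpow (Or.inr ⟨by omega, h0uIcc⟩),
        he, one_zpow]
      push_cast
      ring
    rw [Real.norm_eq_abs] at hle
    rw [hcomp] at hle
    have hd : (0:ℝ) < (N:ℝ) - 2 := by linarith
    have heq2 : M * ((1 - s ^ (2 - N)) / ((2:ℝ) - N))
        = M * ((s ^ (2 - N) - 1) / ((N:ℝ) - 2)) := by
      have h1 : ((2:ℝ) - N) ≠ 0 := by linarith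
      have h2 : ((N:ℝ) - 2) ≠ 0 := by linarith
      field_simp
      ring
    rw [heq2] at hle
    have hnn : 0 ≤ M * ((s ^ (2 - N) - 1) / ((N:ℝ) - 2)) :=
      mul_nonneg hM0 (div_nonneg (by linarith) hd.le)
    rw [abs_of_nonneg hnn] at hle
    refine hle.trans ?_
    rw [div_mul_eq_mul_div, mul_div_assoc]
    have hinner : (s ^ (2 - N) - 1) / ((N:ℝ) - 2) ≤ s ^ (2 - N) / ((N:ℝ) - 2) := by
      gcongr
      linarith
    exact mul_le_mul_of_nonneg_left hinner hM0
  -- continuity of the F-integrand on Ioo 0 1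
  have hφ_cont : ContinuousOn (fun s : ℝ => s ^ (2*N - 1) * g s) (Set.Ioo 0 1) := by
    intro x hx
    exact ((continuousAt_zpow₀ x (2*N - 1) (Or.inl (ne_of_gt hx.1))).continuousWithinAt).mul
      (hg_cont x hx)
  -- interval integrability of the F-integrand
  have hφ_int : ∀ t ∈ Set.Ioo (0:ℝ) 1,
      IntervalIntegrable (fun s : ℝ => s ^ (2*N - 1) * g s) volume 0 t := by
    intro t ht
    rw [intervalIntegrable_iff_integrableOn_Ioc_of_le ht.1.le]
    have hsub : Set.Ioc (0:ℝ) t ⊆ Set.Ioo 0 1 := fun x hx => ⟨hx.1, lt_of_le_of_lt hx.2 ht.2⟩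
    refine MeasureTheory.Integrable.mono' (integrable_const (M / ((N:ℝ) - 2)))
      ((hφ_cont.mono hsub).aestronglyMeasurable measurableSet_Ioc) ?_
    rw [MeasureTheory.ae_restrict_iff' measurableSet_Ioc]
    filter_upwards with s hs
    have hs01 : s ∈ Set.Ioo (0:ℝ) 1 := hsub hs
    have hs0 : (0:ℝ) < s := hs01.1
    have h1 : ‖s ^ (2*N - 1) * g s‖ = s ^ (2*N - 1) * |g s| := by
      rw [Real.norm_eq_abs, abs_mul, abs_of_pos (zpow_pos hs0 _)]
    rw [h1]
    calc s ^ (2*N - 1) * |g s|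
        ≤ s ^ (2*N - 1) * (M / ((N:ℝ) - 2) * s ^ (2 - N)) :=
          mul_le_mul_of_nonneg_left (hg_bound s ⟨hs0, hs01.2.le⟩) (zpow_nonneg hs0.le _)
      _ = M / ((N:ℝ) - 2) * s ^ (N + 1) := by
          rw [show s ^ (N+1) = s ^ (2*N-1) * s ^ (2-N) from by
            rw [← zpow_add₀ (ne_of_gt hs0)]; congr 1; ring]
          ring
      _ ≤ M / ((N:ℝ) - 2) := by
          have hle1 : s ^ (N + 1) ≤ 1 := by
            have he : s ^ (N + 1) = s ^ ((N+1).toNat) := by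
              rw [← zpow_natCast, Int.toNat_of_nonneg (show (0:ℤ) ≤ N + 1 by omega)]
            rw [he]; exact pow_le_one₀ hs0.le hs01.2.le
          have : 0 ≤ M / ((N:ℝ) - 2) := div_nonneg hM0 (by linarith)
          nlinarith
  -- derivative of F
  have hF_hasDeriv : ∀ r ∈ Set.Ioo (0:ℝ) 1, HasDerivAt F (r ^ (2*N - 1) * g r) r := by
    intro r hr
    exact intervalIntegral.integral_hasDerivAt_right (hφ_int r hr)
      (hφ_cont.stronglyMeasurableAtFilter isOpen_Ioo r hr)
      (hφ_cont.continuousAt (isOpen_Ioo.mem_nhds hr))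
  have hF_cont : ContinuousOn F (Set.Ioo 0 1) := fun r hr =>
    ((hF_hasDeriv r hr).continuousAt).continuousWithinAt
  -- first derivative of fn
  have hfn_d1 : ∀ r ∈ Set.Ioo (0:ℝ) 1,
      HasDerivAt fn ((N:ℝ) * r ^ (-N - 1) * F r - r ^ (N - 1) * g r) r := by
    intro r hr
    have hr0 : r ≠ 0 := ne_of_gt hr.1
    have h1 : HasDerivAt (fun x : ℝ => -(x ^ (-N)) * F x)
        (-(((-N : ℤ) : ℝ) * r ^ (-N - 1)) * F r + -(r ^ (-N)) * (r ^ (2*N - 1) * g r)) r :=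
      ((hasDerivAt_zpow (-N) r (Or.inl hr0)).neg).mul (hF_hasDeriv r hr)
    have h2 : HasDerivAt (fun x : ℝ => -(x ^ (-N)) * F x)
        ((N:ℝ) * r ^ (-N - 1) * F r - r ^ (N - 1) * g r) r := by
      convert h1 using 1
      rw [show r ^ (N-1) = r ^ (-N) * r ^ (2*N-1) from by
        rw [← zpow_add₀ hr0]; congr 1; ring]
      push_cast
      ring
    exact h2.congr_of_eventuallyEq
      (Filter.eventuallyEq_of_mem (isOpen_Ioo.mem_nhds hr) hfn')
  -- second derivative
  have hfn_d2 : ∀ r ∈ Set.Ioo (0:ℝ) 1,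
      HasDerivAt (fun x : ℝ => (N:ℝ) * x ^ (-N - 1) * F x - x ^ (N - 1) * g x)
        ((N:ℝ) * (-(N:ℝ) - 1) * r ^ (-N - 2) * F r + r ^ (N - 2) * g r + f r) r := by
    intro r hr
    have hr0 : r ≠ 0 := ne_of_gt hr.1
    have hA : HasDerivAt (fun x : ℝ => (N:ℝ) * x ^ (-N - 1) * F x)
        (((N:ℝ) * (((-N - 1 : ℤ) : ℝ) * r ^ (-N - 1 - 1))) * F r
          + ((N:ℝ) * r ^ (-N - 1)) * (r ^ (2*N - 1) * g r)) r := by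
      exact ((hasDerivAt_zpow (-N - 1) r (Or.inl hr0)).const_mul ((N:ℝ))).mul
        (hF_hasDeriv r hr)
    have hB : HasDerivAt (fun x : ℝ => x ^ (N - 1) * g x)
        ((((N - 1 : ℤ) : ℝ) * r ^ (N - 1 - 1)) * g r + r ^ (N - 1) * (-(h r))) r :=
      (hasDerivAt_zpow (N - 1) r (Or.inl hr0)).mul (hg_hasDeriv r hr)
    have := hA.sub hB
    refine this.congr_deriv ?_
    have e1 : r ^ (-N - 1 - 1) = r ^ (-N - 2) := by congr 1; ring
    have e2 : r ^ (N - 1 - 1) = r ^ (N - 2) := by congr 1; ring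
    have e3 : r ^ (-N - 1) * r ^ (2*N - 1) = r ^ (N - 2) := by
      rw [← zpow_add₀ hr0]; congr 1; ring
    have e4 : r ^ (N - 1) * h r = f r := by
      rw [hhdef]
      show r ^ (N - 1) * (r ^ (1 - N) * f r) = f r
      rw [← mul_assoc, ← zpow_add₀ hr0, show N - 1 + (1 - N) = 0 from by ring, zpow_zero,
        one_mul]
    rw [e1, e2, show ((N:ℝ) * r ^ (-N-1)) * (r ^ (2*N-1) * g r)
        = (N:ℝ) * (r ^ (-N-1) * r ^ (2*N-1)) * g r from by ring, e3,
      show r ^ (N-1) * -(h r) = -(r ^ (N-1) * h r) from by ring, e4]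
    push_cast
    ring
  -- deriv facts
  have hderiv1 : ∀ r ∈ Set.Ioo (0:ℝ) 1,
      deriv fn r = (N:ℝ) * r ^ (-N - 1) * F r - r ^ (N - 1) * g r :=
    fun r hr => (hfn_d1 r hr).deriv
  have hderiv2 : ∀ r ∈ Set.Ioo (0:ℝ) 1,
      deriv (deriv fn) r
        = (N:ℝ) * (-(N:ℝ) - 1) * r ^ (-N - 2) * F r + r ^ (N - 2) * g r + f r := by
    intro r hr
    have hev : deriv fn =ᶠ[nhds r]
        (fun x => (N:ℝ) * x ^ (-N - 1) * F x - x ^ (N - 1) * g x) :=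
      Filter.eventuallyEq_of_mem (isOpen_Ioo.mem_nhds hr) (fun x hx => hderiv1 x hx)
    rw [hev.deriv_eq]
    exact (hfn_d2 r hr).deriv
  have hD2_cont : ContinuousOn
      (fun x : ℝ => (N:ℝ) * (-(N:ℝ) - 1) * x ^ (-N - 2) * F x + x ^ (N - 2) * g x + f x)
      (Set.Ioo 0 1) := by
    refine ContinuousOn.add (ContinuousOn.add ?_ ?_) (hf.mono (fun x hx => ⟨hx.1.le, hx.2.le⟩))
    · exact (continuousOn_const.mul (fun x hx =>
        (continuousAt_zpow₀ x _ (Or.inl (ne_of_gt hx.1))).continuousWithinAt)).mul hF_cont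
    · exact ContinuousOn.mul (fun x hx =>
        (continuousAt_zpow₀ x _ (Or.inl (ne_of_gt hx.1))).continuousWithinAt) hg_cont
  constructor
  · rw [show (2 : WithTop ℕ∞) = 1 + 1 from rfl,
      contDiffOn_succ_iff_deriv_of_isOpen isOpen_Ioo]
    refine ⟨fun r hr => (hfn_d1 r hr).differentiableAt.differentiableWithinAt, by simp, ?_⟩
    have hD1_cd : ContDiffOn ℝ 1
        (fun x : ℝ => (N:ℝ) * x ^ (-N - 1) * F x - x ^ (N - 1) * g x) (Set.Ioo 0 1) := by
      rw [show (1 : WithTop ℕ∞) = 0 + 1 from rfl,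
        contDiffOn_succ_iff_deriv_of_isOpen isOpen_Ioo]
      refine ⟨fun r hr => (hfn_d2 r hr).differentiableAt.differentiableWithinAt, by simp, ?_⟩
      rw [contDiffOn_zero]
      exact hD2_cont.congr (fun x hx => (hfn_d2 x hx).deriv)
    exact hD1_cd.congr hderiv1
  · intro r hr
    have hr0 : r ≠ 0 := ne_of_gt hr.1
    rw [hderiv2 r hr, hderiv1 r hr, hfn r hr]
    have c1 : (1/r) * r ^ (-N - 1) = r ^ (-N - 2) := by
      rw [one_div, ← zpow_neg_one, ← zpow_add₀ hr0]; congr 1; ring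
    have c2 : (1/r) * r ^ (N - 1) = r ^ (N - 2) := by
      rw [one_div, ← zpow_neg_one, ← zpow_add₀ hr0]; congr 1; ring
    have c3 : (16 * (n:ℝ)^2 / r^2) * r ^ (-N) = (N:ℝ)^2 * r ^ (-N - 2) := by
      have h16 : (16 * (n:ℝ)^2) = (N:ℝ)^2 := by rw [hNdef]; push_cast; ring
      have hr2 : (r^2 : ℝ) = r ^ (2:ℤ) := by norm_cast
      rw [h16, div_mul_eq_mul_div, mul_div_assoc]
      congr 1
      rw [hr2, div_eq_mul_inv, ← zpow_neg, ← zpow_add₀ hr0]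
      have he : -N + -2 = -N - 2 := by ring
      rw [he]
    have e1 : (1/r) * ((N:ℝ) * r ^ (-N - 1) * F r - r ^ (N - 1) * g r)
        = (N:ℝ) * r ^ (-N - 2) * F r - r ^ (N - 2) * g r := by
      rw [mul_sub,
        show (1/r) * ((N:ℝ) * r ^ (-N-1) * F r) = (N:ℝ) * ((1/r) * r ^ (-N-1)) * F r from
          by ring, c1,
        show (1/r) * (r ^ (N-1) * g r) = ((1/r) * r ^ (N-1)) * g r from by ring, c2]
    have e2 : (16 * (n:ℝ)^2 / r^2) * (-(r ^ (-N)) * F r)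
        = -((N:ℝ)^2 * r ^ (-N - 2) * F r) := by
      rw [show (16 * (n:ℝ)^2 / r^2) * (-(r ^ (-N)) * F r)
          = -(((16 * (n:ℝ)^2 / r^2) * r ^ (-N)) * F r) from by ring, c3]
    rw [e1, e2]
    ring
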